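/- For every vector w ∈ ℝ³, the 2×2 complex matrices (‖w‖·I ± w·σ)/2 are positive semidefinite, where w·σ = w_1 σ_x + w_2 σ_y + w_3 σ_z is the Pauli combination. Consequently, for unbiased qubit measurement vectors m_1,...,m_N with w_a = Σ_k (-1)^{a_k} m_k and p(a) = ‖w_a‖ / Σ_b ‖w_b‖, the operators E_{±,a} = (p(a)·I ± w_a·σ / Σ_b ‖w_b‖)/2 are positive semidefinite and satisfy Σ_{±,a} E_{±,a} = I, i.e., they form a POVM. -/

import Mathlib

open scoped Matrix ComplexOrder

/-- The three Pauli matrices `σ_x, σ_y, σ_z`. -/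
noncomputable def pauli : Fin 3 → Matrix (Fin 2) (Fin 2) ℂ
  | 0 => !![0, 1; 1, 0]
  | 1 => !![0, -Complex.I; Complex.I, 0]
  | 2 => !![1, 0; 0, -1]

/-- The Pauli combination `w·σ = w₁σ_x + w₂σ_y + w₃σ_z` of a real 3-vector. -/
noncomputable def pauliDot (w : EuclideanSpace ℝ (Fin 3)) : Matrix (Fin 2) (Fin 2) ℂ :=
  ∑ i : Fin 3, (w i : ℂ) • pauli i

lemma pauliDot_eq (u : EuclideanSpace ℝ (Fin 3)) :
    pauliDot u = !![(u 2 : ℂ), (u 0 : ℂ) - (u 1 : ℂ) * Complex.I;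
                   (u 0 : ℂ) + (u 1 : ℂ) * Complex.I, -(u 2 : ℂ)] := by
  ext i j
  fin_cases i <;> fin_cases j <;>
    simp [pauliDot, pauli, Fin.sum_univ_three] <;> ring

lemma pauliDot_herm (u : EuclideanSpace ℝ (Fin 3)) : (pauliDot u).IsHermitian := by
  rw [pauliDot_eq]
  ext i j
  fin_cases i <;> fin_cases j <;>
    simp [Matrix.conjTranspose_apply, Complex.ext_iff]

lemma real_key (n t ε u0 u1 u2 v0 v1 v2 s : ℝ) (hn : 0 ≤ n)
    (hn2 : n^2 = u0^2+u1^2+u2^2) (hv : v0^2+v1^2+v2^2 = s^2) (hs : 0 ≤ s)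
    (ht : 0 ≤ t) (hε : ε^2 ≤ t^2) :
    0 ≤ t*(n*s) + ε*(u0*v0+u1*v1+u2*v2) := by
  have hr : (u0*v0+u1*v1+u2*v2)^2 ≤ n^2*s^2 := by
    rw [hn2, ← hv]
    nlinarith [sq_nonneg (u0*v1-u1*v0), sq_nonneg (u0*v2-u2*v0), sq_nonneg (u1*v2-u2*v1)]
  set r := u0*v0+u1*v1+u2*v2 with hrdef
  clear_value r
  nlinarith [sq_nonneg r, mul_nonneg hn hs, mul_nonneg ht (mul_nonneg hn hs),
    sq_nonneg (t*(n*s) + ε*r), sq_nonneg (t*(n*s) - ε*r), sq_nonneg ε]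

lemma norm_sq_eq (u : EuclideanSpace ℝ (Fin 3)) : ‖u‖^2 = (u 0)^2 + (u 1)^2 + (u 2)^2 := by
  rw [EuclideanSpace.norm_eq, Real.sq_sqrt (by positivity)]
  simp [Fin.sum_univ_three, sq_abs]

lemma master (u : EuclideanSpace ℝ (Fin 3)) (t ε : ℝ) (ht : 0 ≤ t) (hε : ε^2 ≤ t^2) :
    (((t * ‖u‖ : ℝ) : ℂ) • (1 : Matrix (Fin 2) (Fin 2) ℂ) + (ε : ℂ) • pauliDot u).PosSemidef := by
  rw [Matrix.posSemidef_iff_dotProduct_mulVec]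
  constructor
  · unfold Matrix.IsHermitian
    rw [Matrix.conjTranspose_add, Matrix.conjTranspose_smul, Matrix.conjTranspose_smul,
      Matrix.conjTranspose_one, (pauliDot_herm u)]
    simp [Complex.conj_ofReal]
  · intro x
    have h := real_key ‖u‖ t ε (u 0) (u 1) (u 2)
      (2*((x 0).re*(x 1).re + (x 0).im*(x 1).im))
      (2*((x 0).re*(x 1).im - (x 0).im*(x 1).re))
      ((x 0).re^2 + (x 0).im^2 - (x 1).re^2 - (x 1).im^2)
      ((x 0).re^2 + (x 0).im^2 + (x 1).re^2 + (x 1).im^2)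
      (norm_nonneg u) (norm_sq_eq u) (by ring) (by positivity) ht hε
    have hQ : dotProduct (star x) (((((t*‖u‖:ℝ):ℂ) • (1 : Matrix (Fin 2) (Fin 2) ℂ) + (ε:ℂ) • pauliDot u)) *ᵥ x) =
        ((t*‖u‖:ℝ):ℂ) * (star (x 0) * x 0 + star (x 1) * x 1)
        + (ε:ℂ) * ((u 2:ℂ) * (star (x 0) * x 0) + ((u 0:ℂ) - (u 1:ℂ) * Complex.I) * (star (x 0) * x 1)
           + ((u 0:ℂ) + (u 1:ℂ) * Complex.I) * (star (x 1) * x 0) - (u 2:ℂ) * (star (x 1) * x 1)) := by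
      simp [dotProduct, Matrix.mulVec, Fin.sum_univ_two, pauliDot_eq, Matrix.one_apply]
      ring
    rw [hQ, Complex.le_def]
    constructor
    · simp only [Complex.add_re, Complex.sub_re, Complex.mul_re, Complex.mul_im,
        Complex.ofReal_re, Complex.ofReal_im, Complex.I_re, Complex.I_im,
        Complex.sub_im, Complex.add_im, Complex.zero_re, RCLike.star_def,
        Complex.conj_re, Complex.conj_im]
      nlinarith [h]
    · simp only [Complex.add_re, Complex.sub_re, Complex.mul_re, Complex.mul_im,
        Complex.ofReal_re, Complex.ofReal_im, Complex.I_re, Complex.I_im,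
        Complex.sub_im, Complex.add_im, Complex.zero_im, RCLike.star_def,
        Complex.conj_re, Complex.conj_im]
      ring


/-- For every `w ∈ ℝ³` the matrices `(‖w‖·I ± w·σ)/2` are positive semidefinite; and
for vectors `m₁,...,m_N` with `w_a = ∑_k (-1)^{a_k} m_k`, `S = ∑_b ‖w_b‖ > 0` and
`p(a) = ‖w_a‖/S`, the operators `E_{±,a} = (p(a)·I ± w_a·σ/S)/2` are positive
semidefinite and sum to the identity, i.e. they form a POVM. -/
theorem pauli_halves_posSemidef_and_parent_POVM
    (N : ℕ) (m : Fin N → EuclideanSpace ℝ (Fin 3))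
    (w : (Fin N → Bool) → EuclideanSpace ℝ (Fin 3))
    (hw : ∀ a, w a = ∑ k : Fin N, (if a k then (-1 : ℝ) else 1) • m k)
    (S : ℝ) (hS : S = ∑ a : Fin N → Bool, ‖w a‖) (hSpos : 0 < S)
    (E : Bool × (Fin N → Bool) → Matrix (Fin 2) (Fin 2) ℂ)
    (hE : ∀ sa, E sa = (1 / 2 : ℂ) •
        (((‖w sa.2‖ / S : ℝ) : ℂ) • (1 : Matrix (Fin 2) (Fin 2) ℂ)
          + ((if sa.1 then 1 else -1) / (S : ℂ)) • pauliDot (w sa.2))) :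
    (∀ u : EuclideanSpace ℝ (Fin 3),
        (((1 : ℝ) / 2 : ℂ) • (((‖u‖ : ℝ) : ℂ) • (1 : Matrix (Fin 2) (Fin 2) ℂ)
            + pauliDot u)).PosSemidef ∧
        (((1 : ℝ) / 2 : ℂ) • (((‖u‖ : ℝ) : ℂ) • (1 : Matrix (Fin 2) (Fin 2) ℂ)
            - pauliDot u)).PosSemidef) ∧
    (∀ sa, (E sa).PosSemidef) ∧
    (∑ sa : Bool × (Fin N → Bool), E sa = 1) := by
  have hSne : (S : ℝ) ≠ 0 := hSpos.ne'
  refine ⟨fun u => ⟨?_, ?_⟩, ?_, ?_⟩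
  · have h1 : ((1:ℝ)/2 : ℂ) • ((((‖u‖ : ℝ)):ℂ) • (1 : Matrix (Fin 2) (Fin 2) ℂ) + pauliDot u)
        = (((1/2) * ‖u‖ : ℝ):ℂ) • 1 + (((1/2 : ℝ)):ℂ) • pauliDot u := by
      rw [smul_add, smul_smul]
      push_cast
      norm_num
    rw [h1]
    exact master u (1/2) (1/2) (by norm_num) (by norm_num)
  · have h2 : ((1:ℝ)/2 : ℂ) • ((((‖u‖ : ℝ)):ℂ) • (1 : Matrix (Fin 2) (Fin 2) ℂ) - pauliDot u)
        = (((1/2) * ‖u‖ : ℝ):ℂ) • 1 + (((-1/2 : ℝ)):ℂ) • pauliDot u := by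
      rw [smul_sub, smul_smul, sub_eq_add_neg, ← neg_smul]
      push_cast
      norm_num
    rw [h2]
    exact master u (1/2) (-1/2) (by norm_num) (by norm_num)
  · rintro ⟨s, a⟩
    have hEq : E (s, a) = (((1/(2*S)) * ‖w a‖ : ℝ):ℂ) • (1 : Matrix (Fin 2) (Fin 2) ℂ)
        + (((if s then (1:ℝ) else -1)/(2*S) : ℝ):ℂ) • pauliDot (w a) := by
      rw [hE ⟨s, a⟩]
      rw [smul_add, smul_smul, smul_smul]
      congr 1
      · congr 1
        push_cast
        ring
      · congr 1
        cases s <;> · simp only [if_true, if_false, Bool.false_eq_true]; push_cast; ring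
    rw [hEq]
    refine master (w a) (1/(2*S)) _ (by positivity) ?_
    cases s <;> · simp only [if_true, if_false, Bool.false_eq_true]; exact le_of_eq (by ring)
  · rw [Fintype.sum_prod_type, Fintype.sum_bool, ← Finset.sum_add_distrib]
    have hpair : ∀ a : Fin N → Bool, E (true, a) + E (false, a)
        = ((‖w a‖/S : ℝ):ℂ) • (1 : Matrix (Fin 2) (Fin 2) ℂ) := by
      intro a
      rw [hE ⟨true, a⟩, hE ⟨false, a⟩]
      simp only [if_true, if_false, Bool.false_eq_true]
      module
    simp_rw [hpair]
    rw [← Finset.sum_smul]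
    have : (∑ a : Fin N → Bool, ((‖w a‖/S : ℝ):ℂ)) = 1 := by
      rw [← Complex.ofReal_sum, ← Finset.sum_div, ← hS, div_self hSne]
      norm_num
    rw [this, one_smul]
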